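/- Let x₀ ∈ ℝ^d be nonzero with support T, let C = { sgn(x₀) + u : u ∈ ℝ^d, supp u ∩ T = ∅, ‖u‖_∞ ≤ 1 } be the subdifferential of the ℓ1-norm at x₀, let (S_i)_{i=1}^k be a partition of {1,…,d}, and for v ∈ ℝ_+^k let Δ^v = diag(Σ_{i=1}^k v_i 1_{S_i}). Then for all v₁, v₂ ∈ ℝ_+^k and θ ∈ [0,1], θ·Δ^{v₁}C + (1−θ)·Δ^{v₂}C ⊆ Δ^{θv₁+(1−θ)v₂}C (Minkowski sum of the scaled image sets). -/

import Mathlib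

open MeasureTheory ProbabilityTheory
open scoped Pointwise BigOperators

noncomputable section

/-- The diagonal entries of `Δ^v = diag(∑ i, v i • 𝟏_{S i})`. -/
def blockWeight {d k : ℕ} (S : Fin k → Finset (Fin d)) (v : Fin k → ℝ) (j : Fin d) : ℝ :=
  ∑ i, if j ∈ S i then v i else 0

/-- The linear map given by the diagonal matrix `Δ^v`. -/
def deltaMap {d k : ℕ} (S : Fin k → Finset (Fin d)) (v : Fin k → ℝ)
    (p : EuclideanSpace ℝ (Fin d)) : EuclideanSpace ℝ (Fin d) :=
  WithLp.toLp 2 (fun j => blockWeight S v j * p j)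

/-- The sign vector of `x₀` (with `sgn 0 = 0`). -/
def sgnVec {d : ℕ} (x₀ : EuclideanSpace ℝ (Fin d)) : EuclideanSpace ℝ (Fin d) :=
  WithLp.toLp 2 (fun j => Real.sign (x₀ j))

/-- The subdifferential of the ℓ1-norm at `x₀`:
`C = { sgn x₀ + u : supp u ∩ supp x₀ = ∅, ‖u‖_∞ ≤ 1 }`. -/
def Cset {d : ℕ} (x₀ : EuclideanSpace ℝ (Fin d)) : Set (EuclideanSpace ℝ (Fin d)) :=
  {p | ∃ u : EuclideanSpace ℝ (Fin d),
    (∀ j, x₀ j ≠ 0 → u j = 0) ∧ (∀ j, |u j| ≤ 1) ∧ p = sgnVec x₀ + u}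

lemma blockWeight_nonneg {d k : ℕ} (S : Fin k → Finset (Fin d)) (v : Fin k → ℝ)
    (hv : ∀ i, 0 ≤ v i) (j : Fin d) : 0 ≤ blockWeight S v j := by
  refine Finset.sum_nonneg fun i _ => ?_
  split
  · exact hv i
  · exact le_rfl

lemma blockWeight_comb {d k : ℕ} (S : Fin k → Finset (Fin d)) (v₁ v₂ : Fin k → ℝ)
    (θ : ℝ) (j : Fin d) :
    blockWeight S (θ • v₁ + (1 - θ) • v₂) j
      = θ * blockWeight S v₁ j + (1 - θ) * blockWeight S v₂ j := by
  simp only [blockWeight, Finset.mul_sum, ← Finset.sum_add_distrib]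
  refine Finset.sum_congr rfl fun i _ => ?_
  by_cases h : j ∈ S i <;> simp [h, mul_add]

theorem convex_combination_of_scaled_images {d k : ℕ}
    (x₀ : EuclideanSpace ℝ (Fin d)) (hx₀ : x₀ ≠ 0)
    (S : Fin k → Finset (Fin d))
    (hdisj : ∀ i₁ i₂, i₁ ≠ i₂ → Disjoint (S i₁) (S i₂))
    (hcover : ∀ j, ∃ i, j ∈ S i)
    (v₁ v₂ : Fin k → ℝ) (hv₁ : ∀ i, 0 ≤ v₁ i) (hv₂ : ∀ i, 0 ≤ v₂ i)
    (θ : ℝ) (hθ : θ ∈ Set.Icc (0 : ℝ) 1) :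
    θ • (deltaMap S v₁ '' Cset x₀) + (1 - θ) • (deltaMap S v₂ '' Cset x₀)
      ⊆ deltaMap S (θ • v₁ + (1 - θ) • v₂) '' Cset x₀ := by
  obtain ⟨hθ0, hθ1⟩ := hθ
  have hθ1' : 0 ≤ 1 - θ := by linarith
  rintro z ⟨a, ⟨_, ⟨_, ⟨u₁, hu₁T, hu₁b, rfl⟩, rfl⟩, rfl⟩,
            b, ⟨_, ⟨_, ⟨u₂, hu₂T, hu₂b, rfl⟩, rfl⟩, rfl⟩, rfl⟩
  have hw₁ : ∀ j, 0 ≤ blockWeight S v₁ j := blockWeight_nonneg S v₁ hv₁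
  have hw₂ : ∀ j, 0 ≤ blockWeight S v₂ j := blockWeight_nonneg S v₂ hv₂
  set w₁ : Fin d → ℝ := blockWeight S v₁ with hW1
  set w₂ : Fin d → ℝ := blockWeight S v₂ with hW2
  have hwnn : ∀ j, 0 ≤ θ * w₁ j + (1 - θ) * w₂ j := fun j =>
    add_nonneg (mul_nonneg hθ0 (hw₁ j)) (mul_nonneg hθ1' (hw₂ j))
  -- the new perturbation
  set u : EuclideanSpace ℝ (Fin d) := WithLp.toLp 2 fun j =>
    if θ * w₁ j + (1 - θ) * w₂ j = 0 then 0
    else (θ * w₁ j * u₁ j + (1 - θ) * w₂ j * u₂ j) / (θ * w₁ j + (1 - θ) * w₂ j) with hu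
  have key : ∀ j, (θ * w₁ j + (1 - θ) * w₂ j) * u j
      = θ * w₁ j * u₁ j + (1 - θ) * w₂ j * u₂ j := by
    intro j
    by_cases h : θ * w₁ j + (1 - θ) * w₂ j = 0
    · have h1 : θ * w₁ j = 0 :=
        le_antisymm (by nlinarith [mul_nonneg hθ1' (hw₂ j)]) (mul_nonneg hθ0 (hw₁ j))
      have h2 : (1 - θ) * w₂ j = 0 := by linarith
      simp [hu, h, h1, h2]
    · simp only [hu, PiLp.toLp_apply, if_neg h]
      field_simp
  refine ⟨sgnVec x₀ + u, ⟨u, ?_, ?_, rfl⟩, ?_⟩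
  · intro j hj
    simp [hu, hu₁T j hj, hu₂T j hj]
  · intro j
    by_cases h : θ * w₁ j + (1 - θ) * w₂ j = 0
    · simp [hu, h]
    · have hwpos : 0 < θ * w₁ j + (1 - θ) * w₂ j := lt_of_le_of_ne (hwnn j) (Ne.symm h)
      simp only [hu, PiLp.toLp_apply, if_neg h, abs_div, abs_of_pos hwpos]
      rw [div_le_one hwpos]
      calc |θ * w₁ j * u₁ j + (1 - θ) * w₂ j * u₂ j|
          ≤ |θ * w₁ j * u₁ j| + |(1 - θ) * w₂ j * u₂ j| := abs_add_le _ _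
        _ ≤ θ * w₁ j * 1 + (1 - θ) * w₂ j * 1 := by
            rw [abs_mul, abs_mul, abs_mul, abs_mul,
              abs_of_nonneg hθ0, abs_of_nonneg hθ1', abs_of_nonneg (hw₁ j),
              abs_of_nonneg (hw₂ j)]
            gcongr
            · exact mul_nonneg hθ0 (hw₁ j)
            · exact hu₁b j
            · exact mul_nonneg hθ1' (hw₂ j)
            · exact hu₂b j
        _ = θ * w₁ j + (1 - θ) * w₂ j := by ring
  · ext j
    have hcomb := blockWeight_comb S v₁ v₂ θ j
    show blockWeight S (θ • v₁ + (1 - θ) • v₂) j * (sgnVec x₀ j + u j)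
      = θ * (w₁ j * (sgnVec x₀ j + u₁ j)) + (1 - θ) * (w₂ j * (sgnVec x₀ j + u₂ j))
    rw [hcomb, ← hW1, ← hW2]
    linear_combination key j
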